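/- arXiv:2204.10819 — 2 statements merged into one kernel-verified Lean document; each statement's English description precedes it below -/
import Mathlib

section
/- For distinct rational vectors χ_1, ..., χ_k ∈ Q^k that are Vandermonde vectors (χ_i = (1, a_i, ..., a_i^{k-1}) for distinct a_i), the lifted wedge product (u_1 ∧ w_1) ∧ ... ∧ (u_k ∧ w_k), with u_i = (χ_i, 0) and w_i = (0, χ_i), equals c · e_{[2k]} for a scalar c whose sign (-1)^{k(k-1)/2}-normalized value det(χ_1|...|χ_k)^2 is strictly positive. In particular, a sum of such lifted products over distinct tuples of Vandermonde vectors is never zero. -/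
open ExteriorAlgebra

lemma alt_eq_det_smul {n : ℕ} {E : Type*} [AddCommGroup E] [Module ℚ E]
    (f : (Fin n → ℚ) [⋀^Fin n]→ₗ[ℚ] E) (v : Fin n → Fin n → ℚ) :
    f v = (Matrix.of fun i j => v j i).det • f (fun i => Pi.single i 1) := by
  classical
  set e := Pi.basisFun ℚ (Fin n) with he
  have hbe : ⇑e = fun i => Pi.single i (1:ℚ) := funext fun i => Pi.basisFun_apply ℚ (Fin n) i
  have key : f = e.det.smulRight (f e) := by
    refine Module.Basis.ext_alternating e fun g hg => ?_
    let σ : Equiv.Perm (Fin n) := Equiv.ofBijective g (Finite.injective_iff_bijective.1 hg)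
    have hgs : (fun i => e (g i)) = ⇑e ∘ σ := rfl
    rw [hgs, AlternatingMap.map_perm, AlternatingMap.smulRight_apply,
      AlternatingMap.map_perm, Module.Basis.det_self, smul_assoc, one_smul]
  have hv : f v = e.det v • f e := by
    conv_lhs => rw [key]
    rw [AlternatingMap.smulRight_apply]
  rw [hv, Module.Basis.det_apply, hbe]
  have : e.toMatrix v = Matrix.of fun i j => v j i := by
    ext i j
    rw [Module.Basis.toMatrix_apply, Pi.basisFun_repr]
    rfl
  rw [this]

lemma iota_mul_list {M : Type*} [AddCommGroup M] [Module ℚ M] (x : M) :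
    ∀ (l : List M), ι ℚ x * (l.map (ι ℚ)).prod
      = ((-1 : ℚ) ^ l.length) • ((l.map (ι ℚ)).prod * ι ℚ x)
  | [] => by simp
  | y :: l => by
    have hswap : ι ℚ x * ι ℚ y = -(ι ℚ y * ι ℚ x) :=
      eq_neg_of_add_eq_zero_left (ExteriorAlgebra.ι_add_mul_swap (R := ℚ) x y)
    rw [List.map_cons, List.prod_cons, ← mul_assoc, hswap, neg_mul, mul_assoc,
      iota_mul_list x l, List.length_cons, pow_succ, mul_smul_comm, mul_assoc]
    module

lemma interleave_sign {M : Type*} [AddCommGroup M] [Module ℚ M] :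
    ∀ (k : ℕ) (u w : Fin k → M),
      (List.ofFn fun i => ι ℚ (u i) * ι ℚ (w i)).prod
        = ((-1 : ℚ) ^ (k * (k - 1) / 2)) •
          ((List.ofFn fun i => ι ℚ (u i)).prod * (List.ofFn fun i => ι ℚ (w i)).prod)
  | 0, u, w => by simp
  | (k+1), u, w => by
    rw [List.ofFn_succ, List.ofFn_succ, List.ofFn_succ, List.prod_cons, List.prod_cons,
      List.prod_cons, interleave_sign k (fun i => u i.succ) (fun i => w i.succ)]
    have hlist : (List.ofFn fun i : Fin k => ι ℚ (u i.succ)).prod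
        = ((List.ofFn fun i : Fin k => u i.succ).map (ι ℚ)).prod := by
      rw [List.map_ofFn]; rfl
    have hmove : ι ℚ (w 0) * (List.ofFn fun i : Fin k => ι ℚ (u i.succ)).prod
        = ((-1:ℚ)^k) • ((List.ofFn fun i : Fin k => ι ℚ (u i.succ)).prod * ι ℚ (w 0)) := by
      rw [hlist, iota_mul_list]
      simp
    rw [mul_smul_comm, ← mul_assoc, mul_assoc (ι ℚ (u 0)), hmove,
      mul_smul_comm, smul_mul_assoc, smul_smul, ← pow_add]
    have hexp : k * (k - 1) / 2 + k = (k + 1) * (k + 1 - 1) / 2 := by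
      cases k with
      | zero => rfl
      | succ m =>
        simp only [Nat.succ_sub_one]
        have h0 : (m+1)*m = m*(m+1) := by ring
        have h1 : (m+1+1)*(m+1) = m*(m+1) + 2*(m+1) := by ring
        obtain ⟨t, ht⟩ := Nat.even_mul_succ_self m
        omega
    rw [hexp]
    congr 1
    simp [mul_assoc]

noncomputable def leftEmb (k : ℕ) : (Fin k → ℚ) →ₗ[ℚ] (Fin (k + k) → ℚ) where
  toFun χ := Fin.append χ 0
  map_add' χ ψ := funext fun i => by
    refine Fin.addCases (fun j => ?_) (fun j => ?_) i <;>
      simp only [Pi.add_apply, Fin.append_left, Fin.append_right, Pi.zero_apply, add_zero]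
  map_smul' c χ := funext fun i => by
    refine Fin.addCases (fun j => ?_) (fun j => ?_) i <;>
      simp only [Pi.smul_apply, Fin.append_left, Fin.append_right, Pi.zero_apply,
        RingHom.id_apply, smul_eq_mul, mul_zero]

noncomputable def rightEmb (k : ℕ) : (Fin k → ℚ) →ₗ[ℚ] (Fin (k + k) → ℚ) where
  toFun χ := Fin.append 0 χ
  map_add' χ ψ := funext fun i => by
    refine Fin.addCases (fun j => ?_) (fun j => ?_) i <;>
      simp only [Pi.add_apply, Fin.append_left, Fin.append_right, Pi.zero_apply, add_zero]
  map_smul' c χ := funext fun i => by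
    refine Fin.addCases (fun j => ?_) (fun j => ?_) i <;>
      simp only [Pi.smul_apply, Fin.append_left, Fin.append_right, Pi.zero_apply,
        RingHom.id_apply, smul_eq_mul, mul_zero]

lemma leftEmb_single (k : ℕ) (j : Fin k) :
    leftEmb k (Pi.single j (1:ℚ)) = Pi.single (Fin.castAdd k j) (1:ℚ) := by
  funext i
  refine Fin.addCases (fun i' => ?_) (fun i' => ?_) i
  · show Fin.append (Pi.single j (1:ℚ)) 0 (Fin.castAdd k i') = _
    rw [Fin.append_left]
    simp only [Pi.single_apply, Fin.ext_iff, Fin.coe_castAdd]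
  · show Fin.append (Pi.single j (1:ℚ)) 0 (Fin.natAdd k i') = _
    rw [Fin.append_right]
    have : ¬ ((Fin.addNat i' k : Fin (k+k)) = Fin.castAdd k j) := by
      simp only [Fin.ext_iff, Fin.coe_addNat, Fin.coe_castAdd]
      omega
    simp [Pi.single_apply, this]

lemma rightEmb_single (k : ℕ) (j : Fin k) :
    rightEmb k (Pi.single j (1:ℚ)) = Pi.single (Fin.natAdd k j) (1:ℚ) := by
  funext i
  refine Fin.addCases (fun i' => ?_) (fun i' => ?_) i
  · show Fin.append (0 : Fin k → ℚ) (Pi.single j (1:ℚ)) (Fin.castAdd k i') = _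
    rw [Fin.append_left]
    have : ¬ ((Fin.castAdd k i' : Fin (k+k)) = Fin.addNat j k) := by
      simp only [Fin.ext_iff, Fin.coe_addNat, Fin.coe_castAdd]
      omega
    simp [Pi.single_apply, this]
  · show Fin.append (0 : Fin k → ℚ) (Pi.single j (1:ℚ)) (Fin.natAdd k i') = _
    rw [Fin.append_right]
    have : (Fin.addNat i' k = Fin.addNat j k) ↔ (i' = j) := by
      simp only [Fin.ext_iff, Fin.coe_addNat]
      omega
    simp [Pi.single_apply, this]

lemma emb_prod (k : ℕ) (f : (Fin k → ℚ) →ₗ[ℚ] (Fin (k + k) → ℚ)) (v : Fin k → Fin k → ℚ) :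
    (List.ofFn fun i => ι ℚ (f (v i))).prod
      = (Matrix.of fun i j => v j i).det •
          (List.ofFn fun i => ι ℚ (f (Pi.single i 1))).prod := by
  have h1 : (List.ofFn fun i => ι ℚ (f (v i))).prod
      = ExteriorAlgebra.map f (ιMulti ℚ k v) := by
    rw [ExteriorAlgebra.map_apply_ιMulti, ιMulti_apply]; rfl
  have h2 : (List.ofFn fun i => ι ℚ (f (Pi.single i 1))).prod
      = ExteriorAlgebra.map f (ιMulti ℚ k (fun i => Pi.single i 1)) := by
    rw [ExteriorAlgebra.map_apply_ιMulti, ιMulti_apply]; rfl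
  rw [h1, h2, alt_eq_det_smul (ιMulti ℚ k) v]
  exact (ExteriorAlgebra.map f).toLinearMap.map_smul _ _

theorem stmt13 (k : ℕ) (a : Fin k → ℚ) (ha : Function.Injective a) :
    ∃ c : ℚ,
      (List.ofFn fun i =>
          ExteriorAlgebra.ι ℚ
              (Fin.append (fun j : Fin k => a i ^ (j : ℕ)) (0 : Fin k → ℚ)) *
            ExteriorAlgebra.ι ℚ
              (Fin.append (0 : Fin k → ℚ) (fun j : Fin k => a i ^ (j : ℕ)))).prod =
        c • (List.ofFn fun i : Fin (k + k) =>
          ExteriorAlgebra.ι ℚ (Pi.single i (1 : ℚ))).prod ∧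
      (-1 : ℚ) ^ (k * (k - 1) / 2) * c =
        (Matrix.of fun (j i : Fin k) => a i ^ (j : ℕ)).det ^ 2 ∧
      0 < (Matrix.of fun (j i : Fin k) => a i ^ (j : ℕ)).det ^ 2 := by
  classical
  set D : ℚ := (Matrix.of fun (j i : Fin k) => a i ^ (j : ℕ)).det with hDdef
  have hD0 : D ≠ 0 := by
    have hM : (Matrix.of fun (j i : Fin k) => a i ^ (j : ℕ)) = (Matrix.vandermonde a).transpose := rfl
    rw [hDdef, hM, Matrix.det_transpose]
    exact Matrix.det_vandermonde_ne_zero_iff.mpr ha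
  refine ⟨(-1 : ℚ) ^ (k * (k - 1) / 2) * D ^ 2, ?_, ?_, ?_⟩
  · have hL : (List.ofFn fun i : Fin k =>
        ι ℚ (Fin.append (fun j : Fin k => a i ^ (j : ℕ)) (0 : Fin k → ℚ))).prod
        = D • (List.ofFn fun i : Fin k => ι ℚ (Pi.single (Fin.castAdd k i) (1:ℚ))).prod := by
      have h := emb_prod k (leftEmb k) (fun i j => a i ^ (j : ℕ))
      simp only [leftEmb_single] at h
      exact h
    have hR : (List.ofFn fun i : Fin k =>
        ι ℚ (Fin.append (0 : Fin k → ℚ) (fun j : Fin k => a i ^ (j : ℕ)))).prod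
        = D • (List.ofFn fun i : Fin k => ι ℚ (Pi.single (Fin.natAdd k i) (1:ℚ))).prod := by
      have h := emb_prod k (rightEmb k) (fun i j => a i ^ (j : ℕ))
      simp only [rightEmb_single] at h
      exact h
    have htop : (List.ofFn fun i : Fin (k + k) => ι ℚ (Pi.single i (1:ℚ))).prod
        = (List.ofFn fun i : Fin k => ι ℚ (Pi.single (Fin.castAdd k i) (1:ℚ))).prod *
          (List.ofFn fun i : Fin k => ι ℚ (Pi.single (Fin.natAdd k i) (1:ℚ))).prod := by
      rw [List.ofFn_add, List.prod_append]
      rfl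
    rw [interleave_sign k, hL, hR, htop, smul_mul_smul_comm, smul_smul, ← sq]
  · rw [← mul_assoc, ← pow_add]
    have hev : Even (k * (k - 1) / 2 + k * (k - 1) / 2) := ⟨_, rfl⟩
    rw [hev.neg_one_pow, one_mul]
  · exact lt_of_le_of_ne (sq_nonneg D) (Ne.symm (pow_ne_zero 2 hD0))
end

section
/- In an undirected graph G on n vertices, if the number of edges satisfies m > nk, then G contains a simple path on k+1 vertices (a path of length k). -/
open Finset SimpleGraph

lemma greedy_path {V : Type} [Fintype V] [DecidableEq V] (G : SimpleGraph V)
    [DecidableRel G.Adj] (k : ℕ) (hdeg : ∀ v, k < G.degree v) (u : V) :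
    ∀ j, j ≤ k → ∃ (v : V) (p : G.Walk u v), p.IsPath ∧ p.length = j := by
  intro j hj
  induction j with
  | zero => exact ⟨u, Walk.nil, Walk.IsPath.nil, rfl⟩
  | succ j ih =>
    obtain ⟨v, p, hp, hl⟩ := ih (Nat.le_of_succ_le hj)
    have hcard : p.support.toFinset.card < (G.neighborFinset v).card := by
      rw [card_neighborFinset_eq_degree]
      calc p.support.toFinset.card ≤ p.support.length := List.toFinset_card_le _
        _ = p.length + 1 := p.length_support
        _ = j + 1 := by rw [hl]
        _ ≤ k := hj
        _ < G.degree v := hdeg v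
    have : ¬ G.neighborFinset v ⊆ p.support.toFinset := fun hs =>
      absurd (Finset.card_le_card hs) (not_le_of_gt hcard)
    obtain ⟨w, hw, hwn⟩ := Finset.not_subset.mp this
    rw [mem_neighborFinset] at hw
    rw [List.mem_toFinset] at hwn
    refine ⟨w, p.concat hw, ?_, ?_⟩
    · rw [show p.concat hw = (Walk.cons hw.symm p.reverse).reverse by
        simp [Walk.concat_eq_append, Walk.reverse_cons]]
      apply Walk.IsPath.reverse
      rw [Walk.cons_isPath_iff]
      exact ⟨hp.reverse, by rwa [Walk.support_reverse, List.mem_reverse]⟩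
    · rw [Walk.length_concat, hl]

lemma card_edge_induce {V : Type} [Fintype V] [DecidableEq V] (G : SimpleGraph V)
    [DecidableRel G.Adj] (v : V) :
    G.edgeFinset.card ≤
      (G.induce ({v}ᶜ : Set V)).edgeFinset.card + G.degree v := by
  classical
  have hsub : G.incidenceFinset v ⊆ G.edgeFinset := by
    intro e he
    rw [mem_incidenceFinset] at he
    exact mem_edgeFinset.mpr he.1
  have h1 : (G.edgeFinset \ G.incidenceFinset v).card = G.edgeFinset.card - G.degree v := by
    rw [Finset.card_sdiff_of_subset hsub, card_incidenceFinset_eq_degree]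
  have h2 : (G.edgeFinset \ G.incidenceFinset v).card ≤
      (G.induce ({v}ᶜ : Set V)).edgeFinset.card := by
    apply Finset.card_le_card_of_surjOn (fun e => Sym2.map Subtype.val e)
    intro e he
    rw [Finset.mem_coe, Finset.mem_sdiff, mem_edgeFinset, mem_incidenceFinset] at he
    obtain ⟨he1, he2⟩ := he
    induction e with
    | _ a b =>
      have ha : a ∈ ({v}ᶜ : Set V) := by
        intro hav
        exact he2 ⟨he1, by simp [Set.mem_singleton_iff.mp hav]⟩
      have hb : b ∈ ({v}ᶜ : Set V) := by
        intro hbv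
        exact he2 ⟨he1, by simp [Set.mem_singleton_iff.mp hbv]⟩
      refine ⟨s(⟨a, ha⟩, ⟨b, hb⟩), ?_, rfl⟩
      simp only [Finset.mem_coe, mem_edgeFinset]
      exact he1
  omega

lemma main_ind (k : ℕ) : ∀ (n : ℕ) (V : Type) [Fintype V] [DecidableEq V]
    (G : SimpleGraph V) [DecidableRel G.Adj], Fintype.card V = n →
    Fintype.card V * k < G.edgeFinset.card →
    ∃ (u v : V) (p : G.Walk u v), p.IsPath ∧ p.length = k := by
  intro n
  induction n using Nat.strong_induction_on with
  | _ n ih =>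
    intro V _ _ G _ hn h
    by_cases hdeg : ∀ v, k < G.degree v
    · have hpos : 0 < G.edgeFinset.card := Nat.lt_of_le_of_lt (Nat.zero_le _) h
      obtain ⟨e, he⟩ := Finset.card_pos.mp hpos
      induction e with
      | _ a b =>
        obtain ⟨v, p, hp, hl⟩ := greedy_path G k hdeg a k le_rfl
        exact ⟨a, v, p, hp, hl⟩
    · push_neg at hdeg
      obtain ⟨v, hv⟩ := hdeg
      have hcard : Fintype.card ({v}ᶜ : Set V) = n - 1 := by
        rw [Fintype.card_compl_set, hn]
        simp
      have hlt : Fintype.card ({v}ᶜ : Set V) * k < (G.induce ({v}ᶜ : Set V)).edgeFinset.card := by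
        rw [hcard]
        have hA := card_edge_induce G v
        rw [hn] at h
        have hB : (n - 1) * k = n * k - k := by rw [Nat.sub_mul, one_mul]
        have hn1 : 1 ≤ n := hn ▸ Fintype.card_pos_iff.mpr ⟨v⟩
        have hC : k ≤ n * k := Nat.le_mul_of_pos_left k hn1
        omega
      obtain ⟨u', v', p, hp, hl⟩ :=
        ih (n - 1) (by
          have : 1 ≤ n := hn ▸ Fintype.card_pos_iff.mpr ⟨v⟩
          omega) ({v}ᶜ : Set V) (G.induce ({v}ᶜ : Set V)) hcard hlt
      refine ⟨u', v', p.map (SimpleGraph.Embedding.induce ({v}ᶜ : Set V)).toHom, ?_, ?_⟩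
      · exact p.map_isPath_of_injective (RelEmbedding.injective _) hp
      · exact (Walk.length_map _ _).trans hl

theorem stmt16 (n k : ℕ) (G : SimpleGraph (Fin n)) [DecidableRel G.Adj]
    (h : n * k < G.edgeFinset.card) :
    ∃ (u v : Fin n) (p : G.Walk u v), p.IsPath ∧ p.length = k := by
  exact main_ind k n (Fin n) G (Fintype.card_fin n) (by rwa [Fintype.card_fin])
end
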